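/- For all bimoulds A, B, C such that B(∅) = 0, one has answamu(mu(A,B), C) = mu(A, answamu(B,C)). -/

import Mathlib

/-- A bimould: a function assigning to every finite sequence of pairs `(u, v)` of
elements of `K` an element of `R`. -/
abbrev Bimould (K R : Type*) := List (K × K) → R

variable {K R : Type*} [CommRing K] [CommRing R]

/-- The (non-commutative) mould product `mu`:
`mu(A,B)(w) = Σ_{w = a·b} A(a) B(b)` over all prefix/suffix decompositions of `w`. -/
def mu (A B : Bimould K R) : Bimould K R :=
  fun w => ∑ i ∈ Finset.range (w.length + 1), A (w.take i) * B (w.drop i)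

/-- The sequence transformation underlying `swap`: for `w = ((u_1,v_1),…,(u_r,v_r))` it
returns `((v_r, u_1+⋯+u_r), (v_{r-1}-v_r, u_1+⋯+u_{r-1}), …, (v_1-v_2, u_1))`. -/
def swapSeq (w : List (K × K)) : List (K × K) :=
  List.ofFn fun i : Fin w.length =>
    ((w.getD (w.length - 1 - (i : ℕ)) (0, 0)).2 - (w.getD (w.length - (i : ℕ)) (0, 0)).2,
      ((w.take (w.length - (i : ℕ))).map Prod.fst).sum)

/-- The involution `swap`. -/
def swap (A : Bimould K R) : Bimould K R := fun w => A (swapSeq w)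

/-- The involution `anti`, reversing the sequence of letters. -/
def anti (A : Bimould K R) : Bimould K R := fun w => A w.reverse

/-- `swamu`, the `swap`-conjugation of `mu`. -/
def swamu (A B : Bimould K R) : Bimould K R := swap (mu (swap A) (swap B))

/-- `answamu`, the `swap ∘ anti`-conjugation of `mu`. -/
def answamu (A B : Bimould K R) : Bimould K R :=
  anti (swap (mu (swap (anti A)) (swap (anti B))))

/-! helpers -/

/-- `vp w i` is `v_i` (1-indexed second coordinate), with `vp w 0 = 0`. -/
def vp (w : List (K × K)) (i : ℕ) : K := (((0,0) :: w).getD i (0,0)).2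

/-- `us w i` is the sum of the first coordinates of the suffix starting at (0-indexed) `i`. -/
def us (w : List (K × K)) (i : ℕ) : K :=
  ∑ k ∈ Finset.range (w.length - i), (w.getD (i+k) (0,0)).1

lemma vp_zero (w : List (K × K)) : vp w 0 = 0 := rfl

lemma vp_succ (w : List (K × K)) (i : ℕ) : vp w (i+1) = (w.getD i (0,0)).2 := by
  simp [vp]

lemma us_ge (w : List (K × K)) (i : ℕ) (h : w.length ≤ i) : us w i = 0 := by
  simp [us, Nat.sub_eq_zero_of_le h]

lemma us_eq (w : List (K × K)) (i : ℕ) (h : i < w.length) :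
    us w i = (w.getD i (0,0)).1 + us w (i+1) := by
  unfold us
  rw [show w.length - i = (w.length - (i+1)) + 1 by omega, Finset.sum_range_succ']
  simp only [Nat.add_zero]
  rw [add_comm]
  congr 1
  apply Finset.sum_congr rfl
  intro k _
  congr 2
  omega

lemma length_swapSeq (w : List (K × K)) : (swapSeq w).length = w.length := by
  simp [swapSeq]

lemma getD_take {α : Type*} (l : List α) (d : α) (m j : ℕ) (h : j < m) (h2 : j < l.length) :
    (l.take m).getD j d = l.getD j d := by
  rw [List.getD_eq_getElem _ _ (by simp; omega), List.getElem_take, List.getD_eq_getElem _ _ h2]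

lemma getD_drop {α : Type*} (l : List α) (d : α) (i j : ℕ) (h : i + j < l.length) :
    (l.drop i).getD j d = l.getD (i+j) d := by
  rw [List.getD_eq_getElem _ _ (by simp; omega), List.getElem_drop, List.getD_eq_getElem _ _ h]

lemma sum_map_take (f : (K × K) → K) (l : List (K × K)) :
    ∀ m, m ≤ l.length → ((l.take m).map f).sum = ∑ k ∈ Finset.range m, f (l.getD k (0,0)) := by
  intro m
  induction m with
  | zero => simp
  | succ n ih =>
    intro h
    rw [List.take_succ, List.map_append, List.sum_append, ih (by omega), Finset.sum_range_succ]
    congr 1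
    rw [List.getElem?_eq_getElem (by omega), List.getD_eq_getElem _ _ (by omega)]
    simp

theorem test : True := trivial

lemma getD_rev {α : Type*} (l : List α) (d : α) (k : ℕ) (h : k < l.length) :
    l.reverse.getD k d = l.getD (l.length - 1 - k) d := by
  rw [List.getD_eq_getElem _ _ (by simpa using h), List.getElem_reverse,
    List.getD_eq_getElem _ _ (by omega)]

lemma vp_eq (w : List (K × K)) (i : ℕ) (hi : 1 ≤ i) : vp w i = (w.getD (i-1) (0,0)).2 := by
  conv_lhs => rw [show i = (i-1)+1 by omega]
  rw [vp_succ]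

/-- Element `i` (0-indexed) of `swapSeq w.reverse` is `(v_{i+1} - v_i, u_{i+1}+⋯+u_r)`. -/
lemma sGetD (w : List (K × K)) (i : ℕ) (h : i < w.length) :
    (swapSeq w.reverse).getD i (0,0) = (vp w (i+1) - vp w i, us w i) := by
  rw [List.getD_eq_getElem _ _ (by rw [length_swapSeq, List.length_reverse]; exact h)]
  unfold swapSeq
  rw [List.getElem_ofFn]
  simp only [List.length_reverse]
  have h1 : w.reverse.getD (w.length - 1 - i) (0,0) = w.getD i (0,0) := by
    rw [getD_rev _ _ _ (by omega)]
    congr 1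
    omega
  have h2 : (w.reverse.getD (w.length - i) (0,0)).2 = vp w i := by
    rcases Nat.eq_zero_or_pos i with hi | hi
    · subst hi
      rw [List.getD_eq_default _ _ (by simp), vp_zero]
    · rw [getD_rev _ _ _ (by omega), vp_eq _ _ hi,
        show w.length - 1 - (w.length - i) = i - 1 by omega]
  congr 1
  · rw [h1, h2, vp_succ]
  · rw [sum_map_take _ _ _ (by simp)]
    unfold us
    conv_rhs => rw [← Finset.sum_range_reflect]
    refine Finset.sum_congr (by simp) (fun k hk => ?_)
    simp only [Finset.mem_range, List.length_reverse] at hk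
    rw [getD_rev _ _ _ (by omega)]
    congr 2
    omega


lemma dropTakeSum (w : List (K × K)) (i m : ℕ) (h : i + m ≤ w.length) :
    ((((swapSeq w.reverse).drop i).take m).map Prod.fst).sum = vp w (i+m) - vp w i := by
  rw [sum_map_take _ _ _ (by rw [List.length_drop, length_swapSeq, List.length_reverse]; omega)]
  have : ∀ k ∈ Finset.range m,
      (((swapSeq w.reverse).drop i).getD k (0,0)).1 = vp w (i+(k+1)) - vp w (i+k) := by
    intro k hk
    simp only [Finset.mem_range] at hk
    rw [getD_drop _ _ _ _ (by rw [length_swapSeq, List.length_reverse]; omega),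
      sGetD _ _ (by omega)]
    rw [show i + k + 1 = i + (k+1) by omega]
  rw [Finset.sum_congr rfl this, Finset.sum_range_sub (fun k => vp w (i+k))]
  simp

lemma takeSum (w : List (K × K)) (m : ℕ) (h : m ≤ w.length) :
    (((swapSeq w.reverse).take m).map Prod.fst).sum = vp w m := by
  have := dropTakeSum w 0 m (by omega)
  simpa [vp_zero] using this


lemma swapSeq_getElem (t : List (K × K)) (k : ℕ) (hk : k < (swapSeq t).length) :
    (swapSeq t)[k] = ((t.getD (t.length - 1 - k) (0,0)).2 - (t.getD (t.length - k) (0,0)).2,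
      ((t.take (t.length - k)).map Prod.fst).sum) := by
  unfold swapSeq
  simp [List.getElem_ofFn]

lemma G_eq (w : List (K × K)) (i : ℕ) (h : i ≤ w.length) :
    (swapSeq ((swapSeq w.reverse).drop i)).reverse
      = (w.drop i).map (fun p => (p.1, p.2 - vp w i)) := by
  apply List.ext_getElem
  · simp [length_swapSeq]
  intro j h₁ h₂
  have hj : j < w.length - i := by simpa [length_swapSeq] using h₂
  rw [List.getElem_reverse, swapSeq_getElem]
  simp only [length_swapSeq, List.length_drop, List.length_reverse]
  rw [show w.length - i - 1 - (w.length - i - 1 - j) = j by omega,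
      show w.length - i - (w.length - i - 1 - j) = j + 1 by omega]
  have ha : ((swapSeq w.reverse).drop i).getD j (0,0)
      = (vp w (i+j+1) - vp w (i+j), us w (i+j)) := by
    rw [getD_drop _ _ _ _ (by rw [length_swapSeq, List.length_reverse]; omega),
      sGetD _ _ (by omega)]
  have hb : (((swapSeq w.reverse).drop i).getD (j+1) (0,0)).2 = us w (i+j+1) := by
    rcases lt_or_ge (i+j+1) w.length with hc | hc
    · rw [getD_drop _ _ _ _ (by rw [length_swapSeq, List.length_reverse]; omega),
        sGetD _ _ (by omega), show i+(j+1) = i+j+1 by omega]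
    · rw [List.getD_eq_default _ _
        (by rw [List.length_drop, length_swapSeq, List.length_reverse]; omega),
        us_ge _ _ (by omega)]
  have hc2 : ((((swapSeq w.reverse).drop i).take (j+1)).map Prod.fst).sum
      = vp w (i+j+1) - vp w i := by
    rw [dropTakeSum w i (j+1) (by omega), show i+(j+1) = i+j+1 by omega]
  rw [ha, hb, hc2, List.getElem_map, List.getElem_drop]
  rw [us_eq _ _ (by omega), vp_succ, List.getD_eq_getElem _ _ (by omega)]
  simp

lemma F_eq (w : List (K × K)) (i : ℕ) (h1 : 1 ≤ i) (h2 : i ≤ w.length) :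
    (swapSeq ((swapSeq w.reverse).take i)).reverse
      = w.take (i-1) ++ [(us w (i-1), vp w i)] := by
  apply List.ext_getElem
  · simp [length_swapSeq, List.length_reverse]
    omega
  intro j h₁ h₂
  have hj : j < i := by
    simp only [List.length_reverse, length_swapSeq, List.length_take] at h₁
    omega
  rw [List.getElem_reverse, swapSeq_getElem]
  simp only [length_swapSeq, List.length_take, List.length_reverse]
  rw [show min i w.length = i by omega]
  rw [show i - 1 - (i - 1 - j) = j by omega, show i - (i - 1 - j) = j + 1 by omega]
  have ha : ((swapSeq w.reverse).take i).getD j (0,0)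
      = (vp w (j+1) - vp w j, us w j) := by
    rw [getD_take _ _ _ _ (by omega) (by rw [length_swapSeq, List.length_reverse]; omega),
      sGetD _ _ (by omega)]
  have hb : (((swapSeq w.reverse).take i).getD (j+1) (0,0)).2
      = if j + 1 < i then us w (j+1) else 0 := by
    rcases lt_or_ge (j+1) i with hc | hc
    · rw [getD_take _ _ _ _ (by omega) (by rw [length_swapSeq, List.length_reverse]; omega),
        sGetD _ _ (by omega), if_pos hc]
    · rw [List.getD_eq_default _ _
        (by rw [List.length_take, length_swapSeq, List.length_reverse]; omega),
        if_neg (by omega)]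
  have hc2 : ((((swapSeq w.reverse).take i).take (j+1)).map Prod.fst).sum = vp w (j+1) := by
    rw [List.take_take, show min (j+1) i = j+1 by omega, takeSum _ _ (by omega)]
  rw [ha, hb, hc2]
  rcases lt_or_ge j (i-1) with hd | hd
  · rw [List.getElem_append_left (by simp; omega), List.getElem_take]
    rw [if_pos (by omega)]
    rw [us_eq _ _ (by omega), vp_succ, List.getD_eq_getElem _ _ (by omega)]
    simp
  · have hji : j = i - 1 := by omega
    rw [List.getElem_append_right (by simp; omega)]
    rw [if_neg (by omega)]
    simp only [List.getElem_singleton]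
    subst hji
    rw [show i - 1 + 1 = i by omega]
    simp


/-- The modified prefix appearing in the closed formula for `answamu`. -/
def cutA (w : List (K × K)) (i : ℕ) : List (K × K) :=
  if i = 0 then [] else w.take (i-1) ++ [(us w (i-1), vp w i)]

/-- The shifted suffix appearing in the closed formula for `answamu`. -/
def cutC (w : List (K × K)) (i : ℕ) : List (K × K) :=
  (w.drop i).map (fun p => (p.1, p.2 - vp w i))

lemma answamu_eq (A B : Bimould K R) (w : List (K × K)) :
    answamu A B w = ∑ i ∈ Finset.range (w.length + 1), A (cutA w i) * B (cutC w i) := by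
  simp only [answamu, anti, swap, mu]
  rw [length_swapSeq, List.length_reverse]
  refine Finset.sum_congr rfl (fun i hi => ?_)
  have hi' : i ≤ w.length := by simpa [Nat.lt_succ_iff] using hi
  congr 1
  · congr 1
    rcases Nat.eq_zero_or_pos i with h0 | h0
    · subst h0
      simp [cutA, swapSeq]
    · rw [F_eq w i h0 hi', cutA, if_neg (by omega)]
  · congr 1
    rw [G_eq w i hi']
    rfl

lemma cutA_length (w : List (K × K)) (i : ℕ) (hi : i ≤ w.length) : (cutA w i).length = i := by
  rcases Nat.eq_zero_or_pos i with h0 | h0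
  · subst h0; simp [cutA]
  · rw [cutA, if_neg (by omega)]
    simp
    omega

lemma us_drop (w : List (K × K)) (j k : ℕ) : us (w.drop j) k = us w (j+k) := by
  unfold us
  rw [List.length_drop, show w.length - j - k = w.length - (j+k) by omega]
  refine Finset.sum_congr rfl (fun l hl => ?_)
  simp only [Finset.mem_range] at hl
  rw [getD_drop _ _ _ _ (by omega), show j + (k + l) = j + k + l by omega]

lemma vp_drop (w : List (K × K)) (j k : ℕ) (hk : 1 ≤ k) (h : j + k ≤ w.length) :
    vp (w.drop j) k = vp w (j+k) := by
  rw [vp_eq _ _ hk, vp_eq _ _ (by omega), getD_drop _ _ _ _ (by omega),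
    show j + (k-1) = j+k-1 by omega]

lemma cutC_drop (w : List (K × K)) (j k : ℕ) (hk : 1 ≤ k) (h : j + k ≤ w.length) :
    cutC (w.drop j) k = cutC w (j+k) := by
  unfold cutC
  rw [List.drop_drop, vp_drop w j k hk h]

lemma cutA_take (w : List (K × K)) (i j : ℕ) (hj : j < i) (hi : i ≤ w.length) :
    (cutA w i).take j = w.take j := by
  rw [cutA, if_neg (by omega), List.take_append_of_le_length (by simp; omega),
    List.take_take, show min j (i-1) = j by omega]

lemma cutA_drop (w : List (K × K)) (i j : ℕ) (hj : j < i) (hi : i ≤ w.length) :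
    (cutA w i).drop j = cutA (w.drop j) (i-j) := by
  rw [cutA, cutA, if_neg (by omega), if_neg (by omega),
    List.drop_append_of_le_length (by simp; omega), List.drop_take]
  rw [us_drop, vp_drop _ _ _ (by omega) (by omega), show j + (i-j-1) = i-1 by omega,
    show j + (i-j) = i by omega, show i-1-j = i-j-1 by omega]


/-- For bimoulds `A, B, C` with `B(∅) = 0`, `answamu(mu(A,B), C) = mu(A, answamu(B,C))`. -/
theorem stmt_7 (A B C : Bimould K R) (hB : B [] = 0) :
    answamu (mu A B) C = mu A (answamu B C) := by
  funext w
  rw [answamu_eq]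
  have key1 : ∀ i ∈ Finset.range (w.length + 1),
      mu A B (cutA w i) * C (cutC w i)
        = ∑ j ∈ Finset.range (w.length + 1),
            A (w.take j) * (B (cutA (w.drop j) (i-j)) * C (cutC w i)) := by
    intro i hi
    have hi' : i ≤ w.length := by simpa [Nat.lt_succ_iff] using hi
    simp only [mu]
    rw [cutA_length w i hi', Finset.sum_mul]
    have e1 : ∑ j ∈ Finset.range (i+1),
        A ((cutA w i).take j) * B ((cutA w i).drop j) * C (cutC w i)
          = ∑ j ∈ Finset.range (i+1),
            A (w.take j) * (B (cutA (w.drop j) (i-j)) * C (cutC w i)) := by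
      refine Finset.sum_congr rfl (fun j hj => ?_)
      have hj' : j ≤ i := Nat.lt_succ_iff.mp (Finset.mem_range.mp hj)
      rcases lt_or_eq_of_le hj' with hlt | heq
      · rw [cutA_take w i j hlt hi', cutA_drop w i j hlt hi', mul_assoc]
      · subst heq
        have d1 : (cutA w j).drop j = [] := by
          exact List.drop_eq_nil_of_le (by rw [cutA_length w j hi'])
        have d2 : cutA (w.drop j) (j - j) = [] := by
          rw [Nat.sub_self]
          simp [cutA]
        rw [d1, d2, hB]
        ring
    rw [e1]
    apply Finset.sum_subset (Finset.range_subset_range.mpr (by omega))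
    intro j hjr hjn
    have hij : i < j := by
      simp only [Finset.mem_range] at hjr hjn
      omega
    rw [show i - j = 0 by omega]
    simp [cutA, hB]
  rw [Finset.sum_congr rfl key1, Finset.sum_comm]
  simp only [mu]
  refine Finset.sum_congr rfl (fun j hj => ?_)
  have hj' : j ≤ w.length := by simpa [Nat.lt_succ_iff] using hj
  rw [answamu_eq, List.length_drop, Finset.mul_sum]
  have h0 : ∀ i ∈ Finset.Ico 0 j,
      A (w.take j) * (B (cutA (w.drop j) (i-j)) * C (cutC w i)) = 0 := by
    intro i hi
    have : i < j := (Finset.mem_Ico.mp hi).2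
    rw [show i - j = 0 by omega]
    simp [cutA, hB]
  rw [Finset.range_eq_Ico, ← Finset.sum_Ico_consecutive _ (Nat.zero_le j) (by omega : j ≤ w.length + 1),
    Finset.sum_eq_zero h0, zero_add, Finset.sum_Ico_eq_sum_range,
    show w.length + 1 - j = w.length - j + 1 by omega]
  refine Finset.sum_congr rfl (fun k hk => ?_)
  have hk' : k ≤ w.length - j := by simpa [Nat.lt_succ_iff] using hk
  rcases Nat.eq_zero_or_pos k with hk0 | hk0
  · subst hk0
    simp [cutA, hB]
  · rw [show j + k - j = k by omega, cutC_drop w j k hk0 (by omega)]
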